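/- Let R ∈ ℝ^{n×n} be entrywise nonnegative with ρ(R) < 1, r ∈ ℝ^n_{≥0}, ℓ(x) = Rx + r, and b̃ = (I − R)⁻¹ r. Then for every ε ∈ ℝ^n with all components positive there exists β_ε ∈ ℝ^n_{≥0} with b̃ ⪯ β_ε ⪯ b̃ + ε and ℓ(β_ε) ≺ β_ε. -/

import Mathlib

open Matrix
open scoped ENNReal NNReal

open Filter Topology in
private lemma matrix_pow_entry_tendsto_zero {n : ℕ} (R : Matrix (Fin n) (Fin n) ℝ)
    (hρ : ∀ μ ∈ spectrum ℂ (R.map Complex.ofReal), ‖μ‖ < 1) (i j : Fin n) :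
    Filter.Tendsto (fun k : ℕ => (R ^ k) i j) Filter.atTop (nhds 0) := by
  letI : NormedRing (Matrix (Fin n) (Fin n) ℂ) := Matrix.linftyOpNormedRing
  letI : NormedAlgebra ℂ (Matrix (Fin n) (Fin n) ℂ) := Matrix.linftyOpNormedAlgebra
  haveI : CompleteSpace (Matrix (Fin n) (Fin n) ℂ) := FiniteDimensional.complete ℂ _
  set A : Matrix (Fin n) (Fin n) ℂ := R.map Complex.ofReal with hAdef
  have hApow : ∀ k : ℕ, A ^ k = (R ^ k).map Complex.ofReal := by
    intro k
    have : A = Complex.ofRealHom.mapMatrix R := rfl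
    rw [this, ← map_pow, RingHom.mapMatrix_apply]
    rfl
  -- spectral radius < 1
  have hsr : spectralRadius ℂ A < 1 := by
    rcases Set.eq_empty_or_nonempty (spectrum ℂ A) with h | h
    · simp only [spectralRadius, h]
      simp
    · refine spectrum.spectralRadius_lt_of_forall_lt_of_nonempty h fun z hz => ?_
      have h1 : ‖z‖ < 1 := by exact hρ z hz
      exact_mod_cast h1
  have hlimsup := spectrum.limsup_pow_nnnorm_pow_one_div_le_spectralRadius A
  obtain ⟨c, hc1, hc2⟩ := ENNReal.lt_iff_exists_nnreal_btwn.mp hsr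
  have hcev : ∀ᶠ k : ℕ in atTop, (‖A ^ k‖₊ : ℝ≥0∞) ^ (1 / (k : ℝ)) < (c : ℝ≥0∞) :=
    Filter.eventually_lt_of_limsup_lt (lt_of_le_of_lt hlimsup hc1)
  have hc1' : (c : ℝ) < 1 := by exact_mod_cast hc2
  have hev' : ∀ᶠ k in atTop, ‖A ^ k‖ ≤ (c : ℝ) ^ k := by
    filter_upwards [hcev, Filter.eventually_ge_atTop 1] with k hk hk1
    have hk0 : (k : ℝ) ≠ 0 := by positivity
    have h2 : ((‖A ^ k‖₊ : ℝ≥0∞) ^ (1 / (k : ℝ))) ^ (k : ℝ) ≤ (c : ℝ≥0∞) ^ (k : ℝ) :=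
      ENNReal.rpow_le_rpow hk.le (Nat.cast_nonneg k)
    rw [← ENNReal.rpow_mul, one_div, inv_mul_cancel₀ hk0, ENNReal.rpow_one,
      ENNReal.rpow_natCast, ← ENNReal.coe_pow, ENNReal.coe_le_coe] at h2
    calc ‖A ^ k‖ = ((‖A ^ k‖₊ : ℝ≥0) : ℝ) := rfl
      _ ≤ ((c ^ k : ℝ≥0) : ℝ) := by exact_mod_cast h2
      _ = (c : ℝ) ^ k := by push_cast; ring
  have hentry : ∀ k : ℕ, ‖(R ^ k) i j‖ ≤ ‖A ^ k‖ := by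
    intro k
    have h1 : (A ^ k) i j = ((R ^ k) i j : ℂ) := by rw [hApow]; rfl
    have h2 : ‖(A ^ k) i j‖₊ ≤ ‖A ^ k‖₊ := by
      rw [Matrix.linfty_opNNNorm_def]
      calc ‖(A ^ k) i j‖₊ ≤ ∑ l, ‖(A ^ k) i l‖₊ :=
            Finset.single_le_sum (f := fun l => ‖(A ^ k) i l‖₊) (fun l _ => zero_le) (Finset.mem_univ j)
        _ ≤ Finset.univ.sup (fun i => ∑ l, ‖(A ^ k) i l‖₊) :=
            Finset.le_sup (f := fun i => ∑ l, ‖(A ^ k) i l‖₊) (Finset.mem_univ i)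
    have h3 : ‖(A ^ k) i j‖ ≤ ‖A ^ k‖ := h2
    rw [h1] at h3
    rw [← Complex.norm_real]
    exact h3
  have hevfin : ∀ᶠ k in atTop, ‖(R ^ k) i j‖ ≤ (c : ℝ) ^ k := by
    filter_upwards [hev'] with k hk using (hentry k).trans hk
  exact squeeze_zero_norm' hevfin
    (tendsto_pow_atTop_nhds_zero_of_lt_one c.coe_nonneg hc1')

/-- For `ℓ(x) = Rx + r` with `R ⪰ 0`, `ρ(R) < 1`, `r ⪰ 0`, and `b̃ = (I − R)⁻¹ r`:
for every positive `ε` there exists `β_ε` with `b̃ ⪯ β_ε ⪯ b̃ + ε` and `ℓ(β_ε) ≺ β_ε`. -/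
theorem affine_subinvariant_near_fixed_point {n : ℕ} (R : Matrix (Fin n) (Fin n) ℝ)
    (hR : ∀ i j, 0 ≤ R i j)
    (hρ : ∀ μ ∈ spectrum ℂ (R.map Complex.ofReal), ‖μ‖ < 1)
    (r : Fin n → ℝ) (hr : ∀ i, 0 ≤ r i)
    (ℓ : (Fin n → ℝ) → (Fin n → ℝ)) (hℓ : ∀ x, ℓ x = R.mulVec x + r)
    (btil : Fin n → ℝ) (hb : btil = (1 - R)⁻¹.mulVec r) :
    ∀ ε : Fin n → ℝ, (∀ i, 0 < ε i) →
      ∃ βε : Fin n → ℝ, (∀ i, 0 ≤ βε i) ∧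
        (∀ i, btil i ≤ βε i) ∧ (∀ i, βε i ≤ btil i + ε i) ∧
        ∀ i, ℓ βε i < βε i := by
  intro ε hε
  rcases Nat.eq_zero_or_pos n with hn | hn
  · subst hn
    exact ⟨fun _ => 0, fun i => i.elim0, fun i => i.elim0, fun i => i.elim0, fun i => i.elim0⟩
  haveI : NeZero n := ⟨hn.ne'⟩
  -- entrywise nonnegativity of powers
  have hRpow : ∀ (N : ℕ) (i j : Fin n), 0 ≤ (R ^ N) i j := by
    intro N
    induction N with
    | zero => intro i j; simp [Matrix.one_apply]; positivity
    | succ N ih =>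
      intro i j
      rw [pow_succ, Matrix.mul_apply]
      exact Finset.sum_nonneg fun k _ => mul_nonneg (ih i k) (hR k j)
  -- monotonicity of mulVec with nonneg matrices
  have hmono : ∀ (M : Matrix (Fin n) (Fin n) ℝ), (∀ i j, 0 ≤ M i j) →
      ∀ (u v : Fin n → ℝ), (∀ i, u i ≤ v i) → ∀ i, (M.mulVec u) i ≤ (M.mulVec v) i := by
    intro M hM u v huv i
    simp only [Matrix.mulVec, dotProduct]
    exact Finset.sum_le_sum fun j _ => mul_le_mul_of_nonneg_left (huv j) (hM i j)
  -- invertibility of 1 - R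
  have hdet : IsUnit (1 - R).det := by
    by_contra hcon
    have h1 : ¬ IsUnit ((1 : Matrix (Fin n) (Fin n) ℂ) - R.map Complex.ofReal) := by
      intro h
      apply hcon
      rw [Matrix.isUnit_iff_isUnit_det] at h
      have heq : (1 : Matrix (Fin n) (Fin n) ℂ) - R.map Complex.ofReal
          = Complex.ofRealHom.mapMatrix (1 - R) := by
        rw [_root_.map_sub, _root_.map_one]; rfl
      rw [heq, ← RingHom.map_det] at h
      rw [isUnit_iff_ne_zero] at h
      rw [isUnit_iff_ne_zero]
      intro h0
      apply h
      rw [h0, map_zero]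
    have hmem : (1 : ℂ) ∈ spectrum ℂ (R.map Complex.ofReal) := by
      rw [spectrum.mem_iff]
      simpa using h1
    have := hρ 1 hmem
    simp at this
  have hdet' : IsUnit ((1 : Matrix (Fin n) (Fin n) ℝ) - R).det := hdet
  -- fixed point equation
  have hfix : ∀ i, R.mulVec btil i + r i = btil i := by
    have h1 : (1 - R).mulVec btil = r := by
      rw [hb, Matrix.mulVec_mulVec, Matrix.mul_nonsing_inv _ hdet', Matrix.one_mulVec]
    intro i
    have h2 := congrFun h1 i
    rw [Matrix.sub_mulVec, Matrix.one_mulVec] at h2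
    have : btil i - R.mulVec btil i = r i := h2
    linarith
  -- R btil ≤ btil
  have hRb : ∀ i, R.mulVec btil i ≤ btil i := fun i => by
    have := hfix i; have := hr i; linarith
  -- powers applied to btil decrease
  have hdec : ∀ (N : ℕ) (i : Fin n), ((R ^ N).mulVec btil) i ≤ btil i := by
    intro N
    induction N with
    | zero => intro i; rw [pow_zero, Matrix.one_mulVec]
    | succ N ih =>
      intro i
      rw [pow_succ, ← Matrix.mulVec_mulVec]
      exact le_trans (hmono (R ^ N) (hRpow N) _ _ hRb i) (ih i)
  -- mulVec of powers tends to zero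
  have hmv : ∀ (v : Fin n → ℝ) (i : Fin n),
      Filter.Tendsto (fun N : ℕ => ((R ^ N).mulVec v) i) Filter.atTop (nhds 0) := by
    intro v i
    have : Filter.Tendsto (fun N : ℕ => ∑ j, (R ^ N) i j * v j) Filter.atTop (nhds 0) := by
      have h0 : (0 : ℝ) = ∑ _j : Fin n, 0 := by simp
      rw [h0]
      exact tendsto_finset_sum _ fun j _ =>
        by simpa using (matrix_pow_entry_tendsto_zero R hρ i j).mul_const (v j)
    exact this
  -- btil nonneg
  have hbnn : ∀ i, 0 ≤ btil i :=
    fun i => le_of_tendsto' (hmv btil i) fun N => hdec N i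
  -- find N with (R^N) 1 < 1 componentwise, N ≥ 1
  set ones : Fin n → ℝ := fun _ => (1 : ℝ) with hones
  have hallev : ∀ᶠ N : ℕ in Filter.atTop, ∀ i, ((R ^ N).mulVec ones) i < 1 := by
    rw [Filter.eventually_all]
    intro i
    exact (hmv ones i).eventually_lt_const one_pos
  obtain ⟨N₀, hN₀⟩ := Filter.eventually_atTop.mp hallev
  set N : ℕ := max N₀ 1 with hN
  have hNbig : ∀ i, ((R ^ N).mulVec ones) i < 1 := hN₀ N (le_max_left _ _)
  have hN1 : 1 ≤ N := le_max_right _ _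
  -- define x
  set x : Fin n → ℝ := fun j => ∑ k ∈ Finset.range N, ((R ^ k).mulVec ones) j with hx
  have hxterm : ∀ (k : ℕ) (j : Fin n), 0 ≤ ((R ^ k).mulVec ones) j := by
    intro k j
    simp only [Matrix.mulVec, dotProduct]
    exact Finset.sum_nonneg fun l _ => mul_nonneg (hRpow k j l) zero_le_one
  have hx1 : ∀ j, 1 ≤ x j := by
    intro j
    have h00 : ((R ^ 0).mulVec ones) j = 1 := by rw [pow_zero, Matrix.one_mulVec]
    calc (1 : ℝ) = ((R ^ 0).mulVec ones) j := h00.symm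
      _ ≤ x j := Finset.single_le_sum (fun k _ => hxterm k j)
          (Finset.mem_range.mpr (lt_of_lt_of_le one_pos hN1))
  have hxpos : ∀ j, 0 < x j := fun j => lt_of_lt_of_le one_pos (hx1 j)
  -- sum of matrices mulVec, componentwise
  have hsum_mulVec : ∀ (s : Finset ℕ) (f : ℕ → Matrix (Fin n) (Fin n) ℝ) (v : Fin n → ℝ)
      (i : Fin n), ((∑ k ∈ s, f k).mulVec v) i = ∑ k ∈ s, ((f k).mulVec v) i := by
    intro s f v i
    simp only [Matrix.mulVec, dotProduct, Matrix.sum_apply, Finset.sum_mul]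
    exact Finset.sum_comm
  set S : Matrix (Fin n) (Fin n) ℝ := ∑ k ∈ Finset.range N, R ^ k with hS
  have hxS : ∀ j, x j = (S.mulVec ones) j := by
    intro j
    rw [hsum_mulVec]
  have hRS : R * S = S + R ^ N - 1 := by
    have h1 : R * S = ∑ k ∈ Finset.range N, R ^ (k + 1) := by
      rw [hS, Finset.mul_sum]
      exact Finset.sum_congr rfl fun k _ => (pow_succ' R k).symm
    have h2 := Finset.sum_range_succ' (fun k => R ^ k) N
    have h3 := Finset.sum_range_succ (fun k => R ^ k) N
    rw [h3] at h2
    rw [h1]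
    rw [pow_zero] at h2
    -- h2 : S + R ^ N = (∑ k in range N, R ^ (k+1)) + 1
    have := eq_sub_of_add_eq h2.symm
    rw [← this]
  -- R x < x componentwise
  have hRx : ∀ i, (R.mulVec x) i < x i := by
    intro i
    have hcomp : (R.mulVec x) i = x i + ((R ^ N).mulVec ones) i - 1 := by
      conv_lhs => rw [show x = S.mulVec ones from funext hxS]
      rw [Matrix.mulVec_mulVec, hRS, Matrix.sub_mulVec, Matrix.add_mulVec,
        Matrix.one_mulVec]
      simp only [Pi.sub_apply, Pi.add_apply]
      rw [← hxS i]
    rw [hcomp]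
    have := hNbig i
    linarith
  -- choose α
  have hne : (Finset.univ : Finset (Fin n)).Nonempty := Finset.univ_nonempty
  set α : ℝ := Finset.univ.inf' hne (fun i => ε i / x i) with hα
  have hαpos : 0 < α := (Finset.lt_inf'_iff hne).mpr fun i _ => div_pos (hε i) (hxpos i)
  have hαle : ∀ i, α ≤ ε i / x i := fun i => Finset.inf'_le _ (Finset.mem_univ i)
  refine ⟨fun i => btil i + α * x i, ?_, ?_, ?_, ?_⟩
  · intro i
    show (0:ℝ) ≤ btil i + α * x i
    exact add_nonneg (hbnn i) (mul_nonneg hαpos.le (hxpos i).le)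
  · intro i
    show btil i ≤ btil i + α * x i
    exact le_add_of_nonneg_right (mul_nonneg hαpos.le (hxpos i).le)
  · intro i
    show btil i + α * x i ≤ btil i + ε i
    have h1 : α * x i ≤ (ε i / x i) * x i :=
      mul_le_mul_of_nonneg_right (hαle i) (hxpos i).le
    rw [div_mul_cancel₀ _ (hxpos i).ne'] at h1
    linarith
  · intro i
    rw [hℓ]
    show (R.mulVec (fun j => btil j + α * x j) + r) i < btil i + α * x i
    have hlin : R.mulVec (fun j => btil j + α * x j) i
        = R.mulVec btil i + α * R.mulVec x i := by
      simp only [Matrix.mulVec, dotProduct, Finset.mul_sum]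
      rw [← Finset.sum_add_distrib]
      exact Finset.sum_congr rfl fun j _ => by ring
    have : (R.mulVec (fun j => btil j + α * x j) + r) i
        = R.mulVec btil i + α * R.mulVec x i + r i := by
      simp only [Pi.add_apply, hlin]
    rw [this]
    have h1 := hfix i
    have h2 : α * R.mulVec x i < α * x i :=
      mul_lt_mul_of_pos_left (hRx i) hαpos
    linarith
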